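/- Let 𝒦 be a knot type complex and C a south-west region. Then the set T = {t ∈ ℝ : the inclusion 𝒦(C_t) ↪ 𝒦 induces a surjection on homology in Maslov grading d(𝒦)} is nonempty, bounded below, upward closed (t ∈ T and t' ≥ t imply t' ∈ T), and attains its infimum; moreover, for all sufficiently negative t the inclusion 𝒦(C_t) ↪ 𝒦 induces the zero map on homology in Maslov grading d(𝒦). In particular Υ^C(𝒦) = min T is a well-defined real number. -/

import Mathlib

open LaurentPolynomial

/-- The ring `𝔽₂[U, U⁻¹]` of Laurent polynomials over the field with two elements;
the variable `U` is `LaurentPolynomial.T 1`, and `U^k = T k`. -/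
abbrev R2 : Type := LaurentPolynomial (ZMod 2)

/-- The underlying data of an Alexander filtered, Maslov graded chain complex over
`R2 = 𝔽₂[U, U⁻¹]`: a finite basis (indexed by `Fin n`), a Maslov grading `M` and an
Alexander grading `A` on basis elements, and a differential matrix `D`, where `D x y`
is the coefficient of the basis element `y` in `∂x`.  An element of the complex is a
function `f : Fin n → R2` (its coordinates in the basis); the monomial `U^k·x`
(that is, `k ∈ (f x).support`) has Maslov grading `M x - 2k`, Alexander filtration
level `A x - k`, and algebraic filtration level `-k`. -/
structure PreCx where
  n : ℕ
  M : Fin n → ℚ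
  A : Fin n → ℤ
  D : Fin n → Fin n → R2

namespace PreCx

/-- The differential applied to an element `f : Fin K.n → R2` of the free module. -/
noncomputable def dApply (K : PreCx) (f : Fin K.n → R2) : Fin K.n → R2 :=
  fun y => ∑ x, K.D x y * f x

/-- `K` is an Alexander filtered, Maslov graded chain complex: `∂² = 0`, and every
monomial `U^k·y` appearing in `∂x` has `k ≥ 0` (only nonnegative powers of `U` occur),
Maslov grading `M y - 2k = M x - 1` (so `∂` drops the Maslov grading by exactly one)
and Alexander filtration level `A y - k ≤ A x` (so `∂` does not increase the Alexander
filtration level; its algebraic filtration level `-k ≤ 0` means `∂` does not increase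
the algebraic filtration level either). -/
def IsComplex (K : PreCx) : Prop :=
  (∀ x z, ∑ y, K.D x y * K.D y z = 0) ∧
  (∀ x y, ∀ k ∈ (K.D x y).coeff.support,
    (K.M y - 2 * (k : ℚ) = K.M x - 1) ∧ (K.A y - k ≤ K.A x) ∧ (0 ≤ k))

/-- `f` is homogeneous of Maslov grading `q`: every monomial `U^k·x` occurring in `f`
satisfies `M x - 2k = q`. -/
def Homog (K : PreCx) (f : Fin K.n → R2) (q : ℚ) : Prop :=
  ∀ x, ∀ k ∈ (f x).coeff.support, K.M x - 2 * (k : ℚ) = q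

/-- `f` is a boundary. -/
def IsBoundary (K : PreCx) (f : Fin K.n → R2) : Prop :=
  ∃ g, f = K.dApply g

/-- The cycle `ξ` is homogeneous of Maslov grading `q` and its homology class freely
generates the homology `H_*(K, ∂)` as an `R2`-module, i.e. `H_*(K,∂) ≅ 𝔽₂[U,U⁻¹]`
generated by a class of Maslov grading `q`. -/
def GeneratesHomology (K : PreCx) (ξ : Fin K.n → R2) (q : ℚ) : Prop :=
  K.dApply ξ = 0 ∧ K.Homog ξ q ∧
  (∀ z, K.dApply z = 0 → ∃ (r : R2) (g : Fin K.n → R2), z = r • ξ + K.dApply g) ∧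
  (∀ r : R2, K.IsBoundary (r • ξ) → r = 0)

/-- `K` is a knot type complex with correction term `dval`: an Alexander filtered,
Maslov graded chain complex whose homology is isomorphic to `𝔽₂[U, U⁻¹]`, generated
by a class of Maslov grading `dval`. -/
def IsKnotType (K : PreCx) (dval : ℚ) : Prop :=
  K.IsComplex ∧ ∃ ξ, K.GeneratesHomology ξ dval

/-- `K` is an acyclic Alexander filtered, Maslov graded chain complex. -/
def IsAcyclic (K : PreCx) : Prop :=
  K.IsComplex ∧ ∀ z, K.dApply z = 0 → K.IsBoundary z

/-- The direct sum of two complexes. -/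
noncomputable def dsum (K L : PreCx) : PreCx where
  n := K.n + L.n
  M := Fin.append K.M L.M
  A := Fin.append K.A L.A
  D := fun i j =>
    Matrix.fromBlocks K.D 0 0 L.D (finSumFinEquiv.symm i) (finSumFinEquiv.symm j)

/-- The tensor product (over `R2`) of two complexes: the basis is `B × B'`
(encoded via `finProdFinEquiv`), with `M(x⊗x') = M x + M x'`,
`A(x⊗x') = A x + A x'` and `∂(x⊗x') = (∂x)⊗x' + x⊗(∂x')`. -/
noncomputable def tensor (K L : PreCx) : PreCx where
  n := K.n * L.n
  M := fun i => K.M (finProdFinEquiv.symm i).1 + L.M (finProdFinEquiv.symm i).2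
  A := fun i => K.A (finProdFinEquiv.symm i).1 + L.A (finProdFinEquiv.symm i).2
  D := fun i j =>
    (if (finProdFinEquiv.symm i).2 = (finProdFinEquiv.symm j).2 then
      K.D (finProdFinEquiv.symm i).1 (finProdFinEquiv.symm j).1 else 0) +
    (if (finProdFinEquiv.symm i).1 = (finProdFinEquiv.symm j).1 then
      L.D (finProdFinEquiv.symm i).2 (finProdFinEquiv.symm j).2 else 0)

end PreCx

/-- The element `f ⊗ g` of the tensor product complex. -/
noncomputable def tensorElem (K L : PreCx) (f : Fin K.n → R2) (g : Fin L.n → R2) :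
    Fin (K.tensor L).n → R2 :=
  fun i => f (finProdFinEquiv.symm i).1 * g (finProdFinEquiv.symm i).2

/-- The trivial knot type complex `𝒯`: one basis element `e` with `∂e = 0`,
`M e = 0`, `A e = 0`.  This is `CFK^∞` of the unknot in `S³`. -/
noncomputable def Triv : PreCx where
  n := 1
  M := fun _ => 0
  A := fun _ => 0
  D := fun _ _ => 0

/-- `F` is (the matrix of) a map from `K` to `L` that shifts the Maslov grading by `s`
and respects both the Alexander and the algebraic filtrations: any monomial `U^k·y`
occurring in `F x` satisfies `M_L y - 2k = M_K x + s`, `A_L y - k ≤ A_K x` and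
`-k ≤ 0`. -/
def IsFilteredDeg (K L : PreCx) (F : Fin K.n → Fin L.n → R2) (s : ℚ) : Prop :=
  ∀ x y, ∀ k ∈ (F x y).coeff.support,
    (L.M y - 2 * (k : ℚ) = K.M x + s) ∧ (L.A y - k ≤ K.A x) ∧ (0 ≤ k)

/-- `F` is (the matrix of) a chain map from `K` to `L`. -/
def IsChainMap (K L : PreCx) (F : Fin K.n → Fin L.n → R2) : Prop :=
  ∀ x z, ∑ y, K.D x y * F y z = ∑ y, F x y * L.D y z

/-- Apply a map-matrix to an element. -/
noncomputable def mapApply (K L : PreCx) (F : Fin K.n → Fin L.n → R2) (f : Fin K.n → R2) :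
    Fin L.n → R2 :=
  fun y => ∑ x, F x y * f x

/-- Composition of map-matrices (first `F`, then `G`). -/
noncomputable def compMx (K L M' : PreCx) (F : Fin K.n → Fin L.n → R2)
    (G : Fin L.n → Fin M'.n → R2) : Fin K.n → Fin M'.n → R2 :=
  fun x z => ∑ y, F x y * G y z

/-- The identity map-matrix. -/
noncomputable def idMx (K : PreCx) : Fin K.n → Fin K.n → R2 :=
  fun x y => if x = y then 1 else 0

/-- The chain maps `F` and `G` from `K` to `L` are chain homotopic via a bi-filtered
homotopy of Maslov degree `+1` (recall that the coefficients are of characteristic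
two, so `F - G = F + G`). -/
def Homotopic (K L : PreCx) (F G : Fin K.n → Fin L.n → R2) : Prop :=
  ∃ H : Fin K.n → Fin L.n → R2, IsFilteredDeg K L H 1 ∧
    ∀ x z, F x z + G x z = (∑ y, K.D x y * H y z) + (∑ y, H x y * L.D y z)

/-- `K` and `L` are chain homotopy equivalent via Maslov grading preserving,
bi-filtered chain homotopy equivalences. -/
def FilteredHomotopyEquiv (K L : PreCx) : Prop :=
  ∃ (F : Fin K.n → Fin L.n → R2) (G : Fin L.n → Fin K.n → R2),
    IsChainMap K L F ∧ IsFilteredDeg K L F 0 ∧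
    IsChainMap L K G ∧ IsFilteredDeg L K G 0 ∧
    Homotopic K K (compMx K L K F G) (idMx K) ∧
    Homotopic L L (compMx L K L G F) (idMx L)

/-- `K` and `L` are isomorphic as Maslov graded, bi-filtered chain complexes. -/
def IsIso (K L : PreCx) : Prop :=
  ∃ (F : Fin K.n → Fin L.n → R2) (G : Fin L.n → Fin K.n → R2),
    IsChainMap K L F ∧ IsFilteredDeg K L F 0 ∧
    IsChainMap L K G ∧ IsFilteredDeg L K G 0 ∧
    compMx K L K F G = idMx K ∧ compMx L K L G F = idMx L

/-- Stable equivalence: `K₁ ⊕ 𝒜₁` and `K₂ ⊕ 𝒜₂` are (graded, bi-filtered) chain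
homotopy equivalent for some acyclic complexes `𝒜₁`, `𝒜₂`. -/
def StablyEquiv (K₁ K₂ : PreCx) : Prop :=
  ∃ A₁ A₂ : PreCx, A₁.IsAcyclic ∧ A₂.IsAcyclic ∧
    FilteredHomotopyEquiv (K₁.dsum A₁) (K₂.dsum A₂)

/-- The chain map `F : K → L` induces an isomorphism on homology: it is injective on
homology (a cycle whose image is a boundary is itself a boundary) and surjective on
homology (every cycle of `L` is, up to a boundary, the image of a cycle of `K`;
recall that coefficients have characteristic two, so `w - F z = w + F z`). -/
def InducesHomologyIso (K L : PreCx) (F : Fin K.n → Fin L.n → R2) : Prop :=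
  (∀ z, K.dApply z = 0 → L.IsBoundary (mapApply K L F z) → K.IsBoundary z) ∧
  (∀ w, L.dApply w = 0 → ∃ z, K.dApply z = 0 ∧ L.IsBoundary (w + mapApply K L F z))

/-- Local equivalence: there are Maslov graded, bi-filtered chain maps in both
directions, each inducing an isomorphism on homology. -/
def LocallyEquiv (K₁ K₂ : PreCx) : Prop :=
  ∃ (F : Fin K₁.n → Fin K₂.n → R2) (G : Fin K₂.n → Fin K₁.n → R2),
    IsChainMap K₁ K₂ F ∧ IsFilteredDeg K₁ K₂ F 0 ∧
    IsChainMap K₂ K₁ G ∧ IsFilteredDeg K₂ K₁ G 0 ∧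
    InducesHomologyIso K₁ K₂ F ∧ InducesHomologyIso K₂ K₁ G

/-- A south-west region of the plane. -/
def SouthWest (C : Set (ℝ × ℝ)) : Prop :=
  C.Nonempty ∧ IsClosed C ∧ C ≠ Set.univ ∧
    ∀ p ∈ C, ∀ q : ℝ × ℝ, q.1 ≤ p.1 → q.2 ≤ p.2 → q ∈ C

/-- `f ∈ K(C_t)`: every monomial `U^k·x` occurring in `f`, located at the point
`(Alexander level, algebraic level) = (A x - k, -k)`, lies in the translate `C_t`
of `C` by the vector `(t, t)`. -/
def PreCx.InRegion (K : PreCx) (C : Set (ℝ × ℝ)) (t : ℝ) (f : Fin K.n → R2) : Prop :=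
  ∀ x, ∀ k ∈ (f x).coeff.support, ((((K.A x - k : ℤ) : ℝ) - t, -(k : ℝ) - t) : ℝ × ℝ) ∈ C

/-- The inclusion `K(C_t) ↪ K` induces a surjection on homology in Maslov grading
`dval`: there is a cycle in `K(C_t)`, homogeneous of Maslov grading `dval`, which is
not a boundary in `K` (for a knot type complex with correction term `dval`, the
homology in Maslov grading `dval` is `𝔽₂`, so such a cycle represents its
generator). -/
def SurjTop (K : PreCx) (dval : ℚ) (C : Set (ℝ × ℝ)) (t : ℝ) : Prop :=
  ∃ z, K.InRegion C t z ∧ K.dApply z = 0 ∧ K.Homog z dval ∧ ¬ K.IsBoundary z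

/-- The upsilon invariant `Υ^C(K)` of a knot type complex `K` with correction term
`dval`, associated to the south-west region `C`. -/
noncomputable def UpsilonC (K : PreCx) (dval : ℚ) (C : Set (ℝ × ℝ)) : ℝ :=
  sInf {t : ℝ | SurjTop K dval C t}

/-- The south-west half-plane `H_t`, for `t ∈ [0,2]`: for `t < 2` it is
`{(x,y) : y ≤ (t/(t-2))·x}`, and `H₂ = {(x,y) : x ≤ 0}`. -/
def Ht (t : ℝ) : Set (ℝ × ℝ) :=
  {p : ℝ × ℝ | (t = 2 ∧ p.1 ≤ 0) ∨ (t ≠ 2 ∧ p.2 ≤ (t / (t - 2)) * p.1)}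

/-- The upsilon function `Υ_t(K) = -2·Υ^{H_t}(K)`. -/
noncomputable def UpsilonT (K : PreCx) (dval : ℚ) (t : ℝ) : ℝ :=
  -2 * UpsilonC K dval (Ht t)


section Aux

lemma homog_eq_of_ne_zero (K : PreCx) (dval : ℚ) {z z' : Fin K.n → R2}
    (hz : K.Homog z dval) (hz' : K.Homog z' dval) (x : Fin K.n)
    (h1 : z x ≠ 0) (h2 : z' x ≠ 0) : z x = z' x := by
  obtain ⟨k, hk⟩ := Finsupp.support_nonempty_iff.mpr (mt AddMonoidAlgebra.coeff_eq_zero.mp h1)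
  obtain ⟨k', hk'⟩ := Finsupp.support_nonempty_iff.mpr (mt AddMonoidAlgebra.coeff_eq_zero.mp h2)
  have hkk' : k = k' := by
    have e1 := hz x k hk; have e2 := hz' x k' hk'
    have : (k:ℚ) = (k':ℚ) := by linarith
    exact_mod_cast this
  subst hkk'
  have hs1 : (z x).coeff.support ⊆ {k} := by
    intro j hj
    have e1 := hz x j hj; have e2 := hz x k hk
    have : (j:ℚ) = (k:ℚ) := by linarith
    simp [show j = k from by exact_mod_cast this]
  have hs2 : (z' x).coeff.support ⊆ {k} := by
    intro j hj
    have e1 := hz' x j hj; have e2 := hz' x k hk'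
    have : (j:ℚ) = (k:ℚ) := by linarith
    simp [show j = k from by exact_mod_cast this]
  have v1 : (z x).coeff k = 1 := by
    have h := Finsupp.mem_support_iff.mp hk
    revert h; generalize (z x).coeff k = a; revert a; decide
  have v2 : (z' x).coeff k = 1 := by
    have h := Finsupp.mem_support_iff.mp hk'
    revert h; generalize (z' x).coeff k = a; revert a; decide
  rw [← AddMonoidAlgebra.coeff_inj, Finsupp.support_subset_singleton.mp hs1, Finsupp.support_subset_singleton.mp hs2, v1, v2]

lemma homog_finite (K : PreCx) (dval : ℚ) : {z : Fin K.n → R2 | K.Homog z dval}.Finite := by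
  apply Set.Finite.of_finite_image (f := fun z x => z x = 0)
  · exact Set.Finite.subset Set.finite_univ (Set.subset_univ _)
  · intro z hz z' hz' h
    funext x
    have hx : (z x = 0) = (z' x = 0) := congrFun h x
    by_cases h0 : z x = 0
    · rw [h0, (hx ▸ h0 : z' x = 0)]
    · exact homog_eq_of_ne_zero K dval hz hz' x h0 (fun h' => h0 (hx.symm ▸ h'))

lemma isClosed_region_set (K : PreCx) (C : Set (ℝ × ℝ)) (hC : IsClosed C)
    (z : Fin K.n → R2) : IsClosed {t : ℝ | K.InRegion C t z} := by
  have he : {t : ℝ | K.InRegion C t z} =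
      ⋂ x, ⋂ k ∈ (z x).coeff.support,
        (fun t : ℝ => (((((K.A x - k : ℤ)) : ℝ) - t, -(k : ℝ) - t))) ⁻¹' C := by
    ext t
    simp only [Set.mem_setOf_eq, Set.mem_iInter, Set.mem_preimage, PreCx.InRegion]
  rw [he]
  refine isClosed_iInter fun x => isClosed_biInter fun k _ => IsClosed.preimage ?_ hC
  exact (continuous_const.sub continuous_id).prodMk (continuous_const.sub continuous_id)

end Aux

/-- For a knot type complex `𝒦` and a south-west region `C`, the set
`T = {t : the inclusion 𝒦(C_t) ↪ 𝒦 induces a surjection on homology in Maslov grading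
d(𝒦)}` is nonempty, bounded below, upward closed, and attains its infimum; moreover,
for all sufficiently negative `t` the inclusion `𝒦(C_t) ↪ 𝒦` induces the zero map on
homology in Maslov grading `d(𝒦)` (every grading-`d(𝒦)` cycle of `𝒦(C_t)` is a
boundary in `𝒦`).  In particular `Υ^C(𝒦) = min T` is a well-defined real number. -/
theorem surjTop_set_properties (K : PreCx) (dval : ℚ) (hK : K.IsKnotType dval)
    (C : Set (ℝ × ℝ)) (hC : SouthWest C) :
    {t : ℝ | SurjTop K dval C t}.Nonempty ∧
    BddBelow {t : ℝ | SurjTop K dval C t} ∧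
    (∀ t, SurjTop K dval C t → ∀ t', t ≤ t' → SurjTop K dval C t') ∧
    SurjTop K dval C (sInf {t : ℝ | SurjTop K dval C t}) ∧
    ∃ t₀ : ℝ, ∀ t ≤ t₀, ∀ z, K.InRegion C t z → K.dApply z = 0 → K.Homog z dval →
      K.IsBoundary z := by
  
  obtain ⟨⟨hd2, hfilt⟩, ξ, hξcyc, hξhom, hgen, hfree⟩ := hK
  obtain ⟨⟨p₀, hp₀⟩, hCcl, hCne, hSW⟩ := hC
  obtain ⟨q₀, hq₀⟩ := (Set.ne_univ_iff_exists_notMem C).mp hCne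
  have hnb : ¬ K.IsBoundary ξ := by
    rintro ⟨g, hg⟩
    exact one_ne_zero (hfree 1 ⟨g, by rw [one_smul]; exact hg⟩)
  have hne : (Finset.univ : Finset (Fin K.n)).Nonempty := by
    rcases Nat.eq_zero_or_pos K.n with h | h
    · exact absurd ⟨ξ, funext fun y => absurd y.2 (by omega)⟩ hnb
    · exact ⟨⟨0, h⟩, Finset.mem_univ _⟩
  set κ : Fin K.n → ℝ := fun x => (((K.M x - dval) / 2 : ℚ) : ℝ) with hκdef
  have hκ : ∀ z : Fin K.n → R2, K.Homog z dval → ∀ x, ∀ k ∈ (z x).coeff.support,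
      (k : ℝ) = κ x := by
    intro z hz x k hk
    have h1 := hz x k hk
    have h2 : (k : ℚ) = (K.M x - dval) / 2 := by linarith
    rw [hκdef]
    show (k : ℝ) = (((K.M x - dval) / 2 : ℚ) : ℝ)
    exact_mod_cast congrArg (fun q : ℚ => (q : ℝ)) h2
  have mono : ∀ (z : Fin K.n → R2) (t t' : ℝ), t ≤ t' →
      K.InRegion C t z → K.InRegion C t' z := by
    intro z t t' htt' hz x k hk
    refine hSW _ (hz x k hk) _ ?_ ?_ <;> dsimp <;> linarith
  -- nonempty
  set t₁ : ℝ := Finset.univ.sup' hne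
    (fun x => max ((K.A x : ℝ) - κ x - p₀.1) (-(κ x) - p₀.2)) with ht₁def
  have hT1 : SurjTop K dval C t₁ := by
    refine ⟨ξ, ?_, hξcyc, hξhom, hnb⟩
    intro x k hk
    have hkκ := hκ ξ hξhom x k hk
    have hb := Finset.le_sup' (f := fun x => max ((K.A x : ℝ) - κ x - p₀.1) (-(κ x) - p₀.2))
      (Finset.mem_univ x)
    have h1 : (K.A x : ℝ) - κ x - p₀.1 ≤ t₁ := le_trans (le_max_left _ _) hb
    have h2 : -(κ x) - p₀.2 ≤ t₁ := le_trans (le_max_right _ _) hb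
    refine hSW p₀ hp₀ _ ?_ ?_ <;> dsimp <;> push_cast <;> linarith
  -- vanishing for very negative t
  set t₀ : ℝ := Finset.univ.inf' hne
    (fun x => min ((K.A x : ℝ) - κ x - q₀.1) (-(κ x) - q₀.2)) with ht₀def
  have hzero : ∀ t ≤ t₀, ∀ z, K.InRegion C t z → K.dApply z = 0 → K.Homog z dval →
      K.IsBoundary z := by
    intro t ht z hreg hcyc hhom
    have hz0 : z = fun _ => 0 := by
      funext x
      by_contra h0
      obtain ⟨k, hk⟩ := Finsupp.support_nonempty_iff.mpr (mt AddMonoidAlgebra.coeff_eq_zero.mp h0)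
      have hkκ := hκ z hhom x k hk
      have hmem := hreg x k hk
      have hb := Finset.inf'_le (f := fun x => min ((K.A x : ℝ) - κ x - q₀.1) (-(κ x) - q₀.2))
        (Finset.mem_univ x)
      have h1 : t ≤ (K.A x : ℝ) - κ x - q₀.1 := le_trans ht (le_trans hb (min_le_left _ _))
      have h2 : t ≤ -(κ x) - q₀.2 := le_trans ht (le_trans hb (min_le_right _ _))
      refine hq₀ (hSW _ hmem q₀ ?_ ?_) <;> dsimp <;> push_cast <;> linarith
    refine ⟨fun _ => 0, ?_⟩
    funext y
    simp [hz0, PreCx.dApply]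
  have hlb : ∀ t ∈ {t : ℝ | SurjTop K dval C t}, t₀ ≤ t := by
    intro t ht
    by_contra hlt
    push_neg at hlt
    obtain ⟨z, h1, h2, h3, h4⟩ := ht
    exact h4 (hzero t hlt.le z h1 h2 h3)
  have hbdd : BddBelow {t : ℝ | SurjTop K dval C t} := ⟨t₀, hlb⟩
  have hup : ∀ t, SurjTop K dval C t → ∀ t', t ≤ t' → SurjTop K dval C t' := by
    rintro t ⟨z, h1, h2, h3, h4⟩ t' htt'
    exact ⟨z, mono z t t' htt' h1, h2, h3, h4⟩
  -- closedness and attainment of the infimum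
  have hTeq : {t : ℝ | SurjTop K dval C t} =
      ⋃ z ∈ {z : Fin K.n → R2 | K.Homog z dval ∧ K.dApply z = 0 ∧ ¬ K.IsBoundary z},
        {t : ℝ | K.InRegion C t z} := by
    ext t
    simp only [Set.mem_setOf_eq, Set.mem_iUnion]
    constructor
    · rintro ⟨z, h1, h2, h3, h4⟩; exact ⟨z, ⟨h3, h2, h4⟩, h1⟩
    · rintro ⟨z, ⟨h3, h2, h4⟩, h1⟩; exact ⟨z, h1, h2, h3, h4⟩
  have hfin : {z : Fin K.n → R2 | K.Homog z dval ∧ K.dApply z = 0 ∧ ¬ K.IsBoundary z}.Finite :=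
    Set.Finite.subset (homog_finite K dval) (fun z h => h.1)
  have hclosed : IsClosed {t : ℝ | SurjTop K dval C t} := by
    rw [hTeq]
    exact Set.Finite.isClosed_biUnion hfin (fun z _ => isClosed_region_set K C hCcl z)
  exact ⟨⟨t₁, hT1⟩, hbdd, hup, hclosed.csInf_mem ⟨t₁, hT1⟩ hbdd, t₀, hzero⟩
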